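/- Let 𝔤 be a finite-dimensional Lie algebra over a field K whose Killing form κ is nondegenerate, and let Z ∈ 𝔤 with Z ≠ 0. Suppose Y ∈ 𝔤 satisfies κ(Y, Z) = 0 and κ(⁅X, Y⁆, Z) = 0 for every X ∈ 𝔤 with κ(X, Z) = 0. Then there exists λ ∈ K with ⁅Y, Z⁆ = λ • Z, i.e. Y ∈ 𝔷_{[Z]}. -/

import Mathlib

/-- Let `𝔤` be a finite-dimensional Lie algebra over a field `K` whose Killing form `κ` is
nondegenerate, and let `Z ∈ 𝔤` with `Z ≠ 0`. Suppose `Y ∈ 𝔤` satisfies `κ(Y, Z) = 0` and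
`κ(⁅X, Y⁆, Z) = 0` for every `X ∈ 𝔤` with `κ(X, Z) = 0`. Then there exists `λ ∈ K` with
`⁅Y, Z⁆ = λ • Z`, i.e. `Y ∈ 𝔷_{[Z]}`. -/
theorem mem_projective_centralizer_of_pairing_eq_zero
    {K : Type*} [Field K] {L : Type*} [LieRing L] [LieAlgebra K L]
    [FiniteDimensional K L] (hnd : (killingForm K L).Nondegenerate)
    (Z : L) (hZ : Z ≠ 0) (Y : L) (hYZ : killingForm K L Y Z = 0)
    (hY : ∀ X : L, killingForm K L X Z = 0 → killingForm K L ⁅X, Y⁆ Z = 0) :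
    ∃ l : K, ⁅Y, Z⁆ = l • Z := by
  set κ := killingForm K L
  set f : L →ₗ[K] K := κ.flip Z with hf
  set g : L →ₗ[K] K := κ.flip ⁅Y, Z⁆ with hg
  have hker : ⨅ i : Unit, LinearMap.ker ((fun _ => f : Unit → L →ₗ[K] K) i)
      ≤ LinearMap.ker g := by
    intro X hX
    simp only [Submodule.mem_iInf, LinearMap.mem_ker] at hX ⊢
    have hXZ : κ X Z = 0 := hX ()
    have h1 := hY X hXZ
    have inv := LieModule.traceForm_apply_lie_apply K L L X Y Z
    show LieModule.traceForm K L L X ⁅Y, Z⁆ = 0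
    rw [← inv]
    exact h1
  have hspan := mem_span_of_iInf_ker_le_ker hker
  rw [Set.range_const, Submodule.mem_span_singleton] at hspan
  obtain ⟨c, hc⟩ := hspan
  refine ⟨c, ?_⟩
  have key : ∀ X : L, κ X (⁅Y, Z⁆ - c • Z) = 0 := by
    intro X
    have hcc := LinearMap.congr_fun hc X
    have hfx : f X = κ X Z := rfl
    have hgx : g X = κ X ⁅Y, Z⁆ := rfl
    simp only [LinearMap.smul_apply, smul_eq_mul, hfx, hgx] at hcc
    simp only [map_sub, map_smul, smul_eq_mul]
    rw [← hcc]
    ring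
  have : ⁅Y, Z⁆ - c • Z = 0 := by
    apply hnd.1
    intro X
    have symm := LieModule.traceForm_comm K L L (⁅Y, Z⁆ - c • Z) X
    rw [show κ (⁅Y, Z⁆ - c • Z) X = κ X (⁅Y, Z⁆ - c • Z) from symm]
    exact key X
  rw [sub_eq_zero] at this
  exact this
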